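/- Let W be a real Banach space, w̄ : [−1,1] → W a continuous function, 𝓕 : W × [−1,1] → W a continuously differentiable map, and 𝓐 : [−1,1] → B(W) a continuous family of bounded linear operators such that 𝓐(α) is injective for every α ∈ [−1,1]. Fix R ∈ [0,∞] and nonnegative constants 𝓨, 𝓩₁, 𝓩₂ such that sup_{α∈[−1,1]} ‖𝓐(α) 𝓕(w̄(α), α)‖ ≤ 𝓨, sup_{α∈[−1,1]} ‖I − 𝓐(α)∘D_w𝓕(w̄(α), α)‖ ≤ 𝓩₁, and ‖𝓐(α)∘(D_w𝓕(w, α) − D_w𝓕(w̄(α), α))‖ ≤ 𝓩₂‖w − w̄(α)‖ for every α ∈ [−1,1] and every w with ‖w − w̄(α)‖ ≤ R. If there exists r ∈ [0, R] such that 𝓨 + r(𝓩₁ − 1) + (r²/2)𝓩₂ ≤ 0 and 𝓩₁ + r𝓩₂ < 1, then there exists a unique continuous function w⋆ : [−1,1] → W satisfying ‖w⋆(α) − w̄(α)‖ ≤ r and 𝓕(w⋆(α), α) = 0 for all α ∈ [−1,1]. -/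

import Mathlib

open scoped ENNReal

private lemma radii_arith {Y Z₁ Z₂ r n : ℝ} (hZ₁0 : 0 ≤ Z₁) (hZ₂0 : 0 ≤ Z₂)
    (hr0 : 0 ≤ r) (hn0 : 0 ≤ n) (hnr : n ≤ r)
    (hP : Y + r * (Z₁ - 1) + r ^ 2 / 2 * Z₂ ≤ 0) :
    Z₁ * n + Z₂ * n ^ 2 / 2 + Y ≤ r := by
  nlinarith [mul_le_mul_of_nonneg_left hnr hZ₁0, mul_le_mul hnr hnr hn0 hr0]

/-- Uniform contraction theorem over the parameter interval `[-1, 1]`: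
existence and uniqueness of a continuous family of zeros `w⋆ : [-1,1] → W` of the
parametrized map `𝓕` near the continuous approximate family `wbar`. -/
theorem uniform_radii_polynomial_contraction
    {W : Type*} [NormedAddCommGroup W] [NormedSpace ℝ W] [CompleteSpace W]
    (wbar : Set.Icc (-1 : ℝ) 1 → W) (hwbar : Continuous wbar)
    (𝓕 : W → ℝ → W) (h𝓕 : ContDiff ℝ 1 (fun p : W × ℝ => 𝓕 p.1 p.2))
    (𝓐 : Set.Icc (-1 : ℝ) 1 → W →L[ℝ] W) (h𝓐cont : Continuous 𝓐)
    (h𝓐inj : ∀ α, Function.Injective (𝓐 α))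
    (R : ℝ≥0∞) (Y Z₁ Z₂ : ℝ) (hY0 : 0 ≤ Y) (hZ₁0 : 0 ≤ Z₁) (hZ₂0 : 0 ≤ Z₂)
    (hY : ∀ α : Set.Icc (-1 : ℝ) 1, ‖𝓐 α (𝓕 (wbar α) α)‖ ≤ Y)
    (hZ₁ : ∀ α : Set.Icc (-1 : ℝ) 1,
      ‖ContinuousLinearMap.id ℝ W -
        (𝓐 α).comp (fderiv ℝ (fun v => 𝓕 v α) (wbar α))‖ ≤ Z₁)
    (hZ₂ : ∀ α : Set.Icc (-1 : ℝ) 1, ∀ w : W, ENNReal.ofReal ‖w - wbar α‖ ≤ R →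
      ‖(𝓐 α).comp (fderiv ℝ (fun v => 𝓕 v α) w - fderiv ℝ (fun v => 𝓕 v α) (wbar α))‖
        ≤ Z₂ * ‖w - wbar α‖)
    (r : ℝ) (hr0 : 0 ≤ r) (hrR : ENNReal.ofReal r ≤ R)
    (hP : Y + r * (Z₁ - 1) + r ^ 2 / 2 * Z₂ ≤ 0)
    (hcontr : Z₁ + r * Z₂ < 1) :
    ∃! wstar : Set.Icc (-1 : ℝ) 1 → W, Continuous wstar ∧
      ∀ α : Set.Icc (-1 : ℝ) 1, ‖wstar α - wbar α‖ ≤ r ∧ 𝓕 (wstar α) α = 0 := by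
  classical
  set κ : ℝ := Z₁ + r * Z₂ with hκdef
  have hκ0 : 0 ≤ κ := by positivity
  have hFdiff : Differentiable ℝ (fun p : W × ℝ => 𝓕 p.1 p.2) := h𝓕.differentiable one_ne_zero
  have hFcont : Continuous (fun p : W × ℝ => 𝓕 p.1 p.2) := h𝓕.continuous
  have hFd_cont : Continuous (fderiv ℝ (fun p : W × ℝ => 𝓕 p.1 p.2)) :=
    h𝓕.continuous_fderiv one_ne_zero
  set J : W →L[ℝ] W × ℝ := (ContinuousLinearMap.id ℝ W).prod 0 with hJdef
  set D : W → ℝ → (W →L[ℝ] W) := fun w α =>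
    ((fderiv ℝ (fun p : W × ℝ => 𝓕 p.1 p.2) (w, α)).comp J) with hDdef
  have hpart : ∀ (w : W) (α : ℝ), HasFDerivAt (fun v => 𝓕 v α) (D w α) w := by
    intro w α
    have h1 : HasFDerivAt (fun v : W => (v, α)) J w :=
      HasFDerivAt.prodMk (hasFDerivAt_id w) (hasFDerivAt_const α w)
    exact ((hFdiff (w, α)).hasFDerivAt).comp w h1
  have hDeq : ∀ (w : W) (α : ℝ), fderiv ℝ (fun v => 𝓕 v α) w = D w α :=
    fun w α => (hpart w α).fderiv
  have hDcont : Continuous (fun p : W × ℝ => D p.1 p.2) := by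
    exact (((ContinuousLinearMap.compL ℝ W (W × ℝ) W).flip J).continuous).comp hFd_cont
  -- the Newton-like operator pointwise in α
  set g : Set.Icc (-1 : ℝ) 1 → W → W := fun α w => w - 𝓐 α (𝓕 w ↑α) with hgdef
  set Dg : Set.Icc (-1 : ℝ) 1 → W → (W →L[ℝ] W) := fun α w =>
    ContinuousLinearMap.id ℝ W - (𝓐 α).comp (D w ↑α) with hDgdef
  have hg' : ∀ (α : Set.Icc (-1 : ℝ) 1) (w : W), HasFDerivAt (g α) (Dg α w) w := by
    intro α w
    exact (hasFDerivAt_id w).sub (((𝓐 α).hasFDerivAt).comp w (hpart w ↑α))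
  have hDgcont : ∀ α : Set.Icc (-1 : ℝ) 1, Continuous (fun w => Dg α w) := by
    intro α
    refine continuous_const.sub ?_
    have h1 : Continuous (fun w : W => D w ↑α) :=
      hDcont.comp (continuous_id.prodMk continuous_const)
    exact ((ContinuousLinearMap.compL ℝ W W W (𝓐 α)).continuous).comp h1
  -- derivative bound on the ball
  have hDgbound : ∀ (α : Set.Icc (-1 : ℝ) 1) (w : W), ‖w - wbar α‖ ≤ r →
      ‖Dg α w‖ ≤ Z₁ + Z₂ * ‖w - wbar α‖ := by
    intro α w hw
    have hwR : ENNReal.ofReal ‖w - wbar α‖ ≤ R :=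
      le_trans (ENNReal.ofReal_le_ofReal hw) hrR
    have h1 := hZ₁ α
    have h2 := hZ₂ α w hwR
    rw [hDeq] at h1
    rw [hDeq, hDeq] at h2
    have hsplit : Dg α w = (ContinuousLinearMap.id ℝ W - (𝓐 α).comp (D (wbar α) ↑α))
        - (𝓐 α).comp (D w ↑α - D (wbar α) ↑α) := by
      rw [ContinuousLinearMap.comp_sub]; show ContinuousLinearMap.id ℝ W - (𝓐 α).comp (D w ↑α) = _; abel
    rw [hsplit]
    calc ‖_ - _‖ ≤ ‖ContinuousLinearMap.id ℝ W - (𝓐 α).comp (D (wbar α) ↑α)‖ +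
          ‖(𝓐 α).comp (D w ↑α - D (wbar α) ↑α)‖ := norm_sub_le _ _
      _ ≤ Z₁ + Z₂ * ‖w - wbar α‖ := add_le_add h1 h2
  -- Lipschitz estimate on the ball
  have hlip : ∀ (α : Set.Icc (-1 : ℝ) 1) (w w' : W), ‖w - wbar α‖ ≤ r → ‖w' - wbar α‖ ≤ r →
      ‖g α w - g α w'‖ ≤ κ * ‖w - w'‖ := by
    intro α w w' hw hw'
    have hconv : Convex ℝ (Metric.closedBall (wbar α) r) := convex_closedBall _ _
    have hb : ∀ x ∈ Metric.closedBall (wbar α) r, ‖Dg α x‖ ≤ κ := by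
      intro x hx
      rw [Metric.mem_closedBall, dist_eq_norm] at hx
      have := hDgbound α x hx
      have hx0 : (0:ℝ) ≤ ‖x - wbar α‖ := norm_nonneg _
      nlinarith
    have := hconv.norm_image_sub_le_of_norm_hasFDerivWithin_le
      (fun x _ => (hg' α x).hasFDerivWithinAt) hb
      (Metric.mem_closedBall.mpr (by rw [dist_eq_norm]; exact hw'))
      (Metric.mem_closedBall.mpr (by rw [dist_eq_norm]; exact hw))
    exact this
  -- ball invariance with the sharp quadratic bound
  have hYbound : ∀ (α : Set.Icc (-1 : ℝ) 1) (w : W), ‖w - wbar α‖ ≤ r →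
      ‖g α w - wbar α‖ ≤ r := by
    intro α w hw
    set h : W := w - wbar α with hhdef
    set c : ℝ → W := fun t => wbar α + t • h with hcdef
    have hc0 : c 0 = wbar α := by simp [hcdef]
    have hc1 : c 1 = w := by simp [hcdef, hhdef]
    have hcnorm : ∀ t : ℝ, c t - wbar α = t • h := by intro t; simp [hcdef]
    have hφ : ∀ t : ℝ, HasDerivAt (fun s => g α (c s)) ((Dg α (c t)) h) t := by
      intro t
      have hc' : HasDerivAt c h t := by
        have h1 : HasDerivAt (fun s : ℝ => s • h) ((1:ℝ) • h) t :=
          (hasDerivAt_id t).smul_const h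
        have h2 := h1.const_add (wbar α); rw [one_smul] at h2; exact h2
      have := (hg' α (c t)).comp_hasDerivAt t hc'
      exact this
    have hccont : Continuous c := continuous_const.add (continuous_id.smul continuous_const)
    have hφ'cont : Continuous fun t : ℝ => (Dg α (c t)) h :=
      (((hDgcont α).comp hccont).clm_apply continuous_const)
    have key : ∫ t in (0:ℝ)..1, (Dg α (c t)) h = g α w - g α (wbar α) := by
      have := intervalIntegral.integral_eq_sub_of_hasDerivAt
        (f := fun s => g α (c s)) (f' := fun t => (Dg α (c t)) h)
        (fun t _ => hφ t) (hφ'cont.intervalIntegrable 0 1)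
      rw [this]
      show g α (c 1) - g α (c 0) = _
      rw [hc0, hc1]
    have hbnd : ‖∫ t in (0:ℝ)..1, (Dg α (c t)) h‖ ≤ Z₁ * ‖h‖ + Z₂ * ‖h‖ ^ 2 / 2 := by
      have hg_int : IntervalIntegrable (fun t : ℝ => Z₁ * ‖h‖ + (Z₂ * ‖h‖ ^ 2) * t)
          MeasureTheory.volume 0 1 :=
        ((continuous_const.add (continuous_const.mul continuous_id)).intervalIntegrable 0 1)
      have hptwise : ∀ t ∈ Set.uIoc (0:ℝ) 1,
          ‖(Dg α (c t)) h‖ ≤ Z₁ * ‖h‖ + (Z₂ * ‖h‖ ^ 2) * t := by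
        intro t ht
        rw [Set.uIoc_of_le (by norm_num : (0:ℝ) ≤ 1)] at ht
        obtain ⟨ht0, ht1⟩ := ht
        have htn : ‖c t - wbar α‖ = t * ‖h‖ := by
          rw [hcnorm, norm_smul, Real.norm_eq_abs, abs_of_nonneg ht0.le]
        have hin : ‖c t - wbar α‖ ≤ r := by
          rw [htn]
          calc t * ‖h‖ ≤ 1 * ‖h‖ := by
                exact mul_le_mul_of_nonneg_right ht1 (norm_nonneg _)
            _ = ‖h‖ := one_mul _
            _ ≤ r := hw
        have hD := hDgbound α (c t) hin
        rw [htn] at hD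
        calc ‖(Dg α (c t)) h‖ ≤ ‖Dg α (c t)‖ * ‖h‖ := (Dg α (c t)).le_opNorm h
          _ ≤ (Z₁ + Z₂ * (t * ‖h‖)) * ‖h‖ :=
              mul_le_mul_of_nonneg_right hD (norm_nonneg _)
          _ = Z₁ * ‖h‖ + (Z₂ * ‖h‖ ^ 2) * t := by ring
      have := intervalIntegral.norm_integral_le_of_norm_le
        (f := fun t => (Dg α (c t)) h) (g := fun t : ℝ => Z₁ * ‖h‖ + (Z₂ * ‖h‖ ^ 2) * t)
        (by norm_num) (MeasureTheory.ae_of_all _ fun t ht =>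
          hptwise t (by rw [Set.uIoc_of_le (by norm_num : (0:ℝ) ≤ 1)]; exact ht)) hg_int
      refine this.trans ?_
      have h2int : IntervalIntegrable (fun t : ℝ => Z₂ * ‖h‖ ^ 2 * t)
          MeasureTheory.volume 0 1 := by
        apply Continuous.intervalIntegrable
        exact continuous_const.mul continuous_id
      have hival : ∫ t in (0:ℝ)..1, (Z₁ * ‖h‖ + (Z₂ * ‖h‖ ^ 2) * t) =
          Z₁ * ‖h‖ + Z₂ * ‖h‖ ^ 2 / 2 := by
        rw [intervalIntegral.integral_add (intervalIntegrable_const) h2int,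
          intervalIntegral.integral_const, intervalIntegral.integral_const_mul, integral_id]
        norm_num
        ring
      rw [hival]
    have hgwbar : ‖g α (wbar α) - wbar α‖ ≤ Y := by
      have : g α (wbar α) - wbar α = -(𝓐 α (𝓕 (wbar α) ↑α)) := by
        show wbar α - 𝓐 α (𝓕 (wbar α) ↑α) - wbar α = -(𝓐 α (𝓕 (wbar α) ↑α))
        abel
      rw [this, norm_neg]
      exact hY α
    have tri : ‖g α w - wbar α‖ ≤ ‖g α w - g α (wbar α)‖ + ‖g α (wbar α) - wbar α‖ :=
      norm_sub_le_norm_sub_add_norm_sub _ _ _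
    have h1 : ‖g α w - g α (wbar α)‖ ≤ Z₁ * ‖h‖ + Z₂ * ‖h‖ ^ 2 / 2 := by
      rw [← key]; exact hbnd
    have hhn : (0:ℝ) ≤ ‖h‖ := norm_nonneg _
    have h2 : Z₁ * ‖h‖ + Z₂ * ‖h‖ ^ 2 / 2 + Y ≤ r :=
      radii_arith hZ₁0 hZ₂0 hr0 hhn hw hP
    linarith [tri, h1, hgwbar, h2]
  -- now work in the Banach space of continuous maps
  set X := C(Set.Icc (-1 : ℝ) 1, W)
  set wb : X := ⟨wbar, hwbar⟩ with hwbdef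
  have hTcont : ∀ f : X, Continuous fun α => g α (f α) := by
    intro f
    have h1 : Continuous fun α : Set.Icc (-1:ℝ) 1 => 𝓕 (f α) ↑α :=
      hFcont.comp (f.continuous.prodMk continuous_subtype_val)
    exact f.continuous.sub (h𝓐cont.clm_apply h1)
  set T : X → X := fun f => ⟨fun α => g α (f α), hTcont f⟩ with hTdef
  set S : Set X := Metric.closedBall wb r with hSdef
  have hSc : IsClosed S := Metric.isClosed_closedBall
  have : CompleteSpace S := hSc.completeSpace_coe
  have hwbS : wb ∈ S := Metric.mem_closedBall_self hr0
  have : Nonempty S := ⟨⟨wb, hwbS⟩⟩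
  have hmem_iff : ∀ f : X, f ∈ S ↔ ∀ α, ‖f α - wbar α‖ ≤ r := by
    intro f
    rw [hSdef, Metric.mem_closedBall, ContinuousMap.dist_le hr0]
    constructor
    · intro hd α; have := hd α; rwa [dist_eq_norm] at this
    · intro hd α; rw [dist_eq_norm]; exact hd α
  have hTS : ∀ f : X, f ∈ S → T f ∈ S := by
    intro f hf
    rw [hmem_iff] at hf ⊢
    intro α
    exact hYbound α (f α) (hf α)
  set T' : S → S := fun f => ⟨T f.1, hTS f.1 f.2⟩ with hT'def
  have hCW : ContractingWith (Real.toNNReal κ) T' := by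
    constructor
    · simpa [Real.toNNReal_lt_one] using hcontr
    · refine LipschitzWith.of_dist_le_mul ?_
      intro x y
      rw [Subtype.dist_eq]
      have hκcoe : ((Real.toNNReal κ : NNReal) : ℝ) = κ := Real.coe_toNNReal κ hκ0
      rw [hκcoe]
      rw [ContinuousMap.dist_le (mul_nonneg hκ0 dist_nonneg)]
      intro α
      rw [dist_eq_norm]
      have hx := (hmem_iff x.1).mp x.2 α
      have hy := (hmem_iff y.1).mp y.2 α
      calc ‖g α (x.1 α) - g α (y.1 α)‖ ≤ κ * ‖x.1 α - y.1 α‖ := hlip α _ _ hx hy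
        _ ≤ κ * dist (x : X) (y : X) := by
            refine mul_le_mul_of_nonneg_left ?_ hκ0
            rw [← dist_eq_norm]
            exact ContinuousMap.dist_apply_le_dist α
  set p : S := hCW.fixedPoint T'
  have hfix : T' p = p := hCW.fixedPoint_isFixedPt
  have hfix' : ∀ α, g α (p.1 α) = p.1 α := by
    intro α
    have : (T' p).1 α = p.1 α := by rw [hfix]
    exact this
  have hzero : ∀ α, 𝓕 (p.1 α) ↑α = 0 := by
    intro α
    have h1 := hfix' α
    have h2 : 𝓐 α (𝓕 (p.1 α) ↑α) = 0 := by
      have : p.1 α - 𝓐 α (𝓕 (p.1 α) ↑α) = p.1 α := h1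
      have := sub_eq_self.mp this
      exact this
    have := h𝓐inj α (by rw [h2, map_zero] : 𝓐 α (𝓕 (p.1 α) ↑α) = 𝓐 α 0)
    exact this
  refine ⟨p.1, ⟨p.1.continuous, fun α => ⟨(hmem_iff p.1).mp p.2 α, hzero α⟩⟩, ?_⟩
  intro w' ⟨hw'c, hw'p⟩
  set f' : X := ⟨w', hw'c⟩ with hf'def
  have hf'S : f' ∈ S := (hmem_iff f').mpr fun α => (hw'p α).1
  have hf'fix : T' ⟨f', hf'S⟩ = ⟨f', hf'S⟩ := by
    apply Subtype.ext
    apply ContinuousMap.ext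
    intro α
    show g α (w' α) = w' α
    rw [hgdef]
    simp only []
    rw [(hw'p α).2, map_zero, sub_zero]
  have : (⟨f', hf'S⟩ : S) = p := hCW.fixedPoint_unique hf'fix
  have hcoe : f' = p.1 := congrArg Subtype.val this
  funext α
  exact congrFun (congrArg DFunLike.coe hcoe) α
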